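/- Let \(\mathcal{D}\) be a quasi-symmetric 2-(37,9,8) design with intersection numbers 1 and 3, and let C be a doubly even self-dual code of length 40 containing the linear span \(C_3 \subseteq \mathbb{F}_2^{40}\) of the vectors \((\chi_B, 1, 1, 1)\) over the blocks B of \(\mathcal{D}\). Then C contains no codeword of weight 8 whose support contains the last three coordinates (coordinates 38, 39, 40). -/

import Mathlib

/-- The weight of a binary vector: its number of nonzero coordinates. -/
def wt {ι : Type*} [Fintype ι] (x : ι → ZMod 2) : ℕ :=
  (Finset.univ.filter fun i => x i ≠ 0).card

/-- The characteristic vector of a block. -/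
def chi {v : ℕ} (b : Finset (Fin v)) : Fin v → ZMod 2 :=
  fun i => if i ∈ b then 1 else 0

/-- The generator `(χ_B, 1, 1, 1)` of the code `C₃ ⊆ 𝔽₂^{40}` (with `v = 37`). -/
def gen3 {v : ℕ} (b : Finset (Fin v)) : Fin v ⊕ Fin 3 → ZMod 2 :=
  Sum.elim (chi b) fun _ => 1

open Finset in
private lemma dc {α β : Type*} [DecidableEq α] [DecidableEq β] (A : Finset α) (B : Finset β)
    (P : α → β → Prop) [∀ a b, Decidable (P a b)] :
    ∑ a ∈ A, (B.filter (P a)).card = ∑ b ∈ B, (A.filter (P · b)).card := by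
  simp_rw [Finset.card_filter]
  rw [Finset.sum_comm]

open Finset in
private lemma zmod2_ne_zero {x : ZMod 2} (h : x ≠ 0) : x = 1 := by
  revert x; decide

open Finset in
private lemma odd_of_cast (n : ℕ) (h : (n : ZMod 2) = 1) : n % 2 = 1 := by
  have h2 : ((n % 2 : ℕ) : ZMod 2) = 1 := by rw [ZMod.natCast_mod]; exact h
  have : n % 2 < 2 := Nat.mod_lt _ (by norm_num)
  interval_cases h3 : n % 2
  · simp at h2
  · rfl

open Finset
section counts
variable (𝓑 : Finset (Finset (Fin 37)))
    (hk : ∀ b ∈ 𝓑, b.card = 9)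
    (hlam : ∀ T : Finset (Fin 37), T.card = 2 → (𝓑.filter fun b => T ⊆ b).card = 8)

include hk hlam in
open Finset in
private lemma block_count : 𝓑.card = 148 := by
  have h := dc (Finset.powersetCard 2 (univ : Finset (Fin 37))) 𝓑 (fun T b => T ⊆ b)
  have hL : ∑ T ∈ Finset.powersetCard 2 (univ : Finset (Fin 37)),
      (𝓑.filter fun b => T ⊆ b).card = 5328 := by
    rw [Finset.sum_congr rfl (fun T hT => hlam T (Finset.mem_powersetCard.mp hT).2)]
    simp [Finset.card_powersetCard]; decide
  have hR : ∀ b ∈ 𝓑, ((Finset.powersetCard 2 (univ : Finset (Fin 37))).filter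
      (fun T => T ⊆ b)).card = 36 := by
    intro b hb
    have : (Finset.powersetCard 2 (univ : Finset (Fin 37))).filter (fun T => T ⊆ b)
        = Finset.powersetCard 2 b := by
      ext T
      simp [Finset.mem_powersetCard, Finset.mem_filter, Finset.subset_univ, and_comm]
    rw [this, Finset.card_powersetCard, hk b hb]; decide
  rw [h, Finset.sum_congr rfl hR, Finset.sum_const, smul_eq_mul] at hL
  omega

include hk hlam in
open Finset in
private lemma repl (p : Fin 37) : (𝓑.filter fun b => p ∈ b).card = 36 := by
  have h := dc ((univ : Finset (Fin 37)).erase p) 𝓑 (fun q b => p ∈ b ∧ q ∈ b)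
  have hL : ∑ q ∈ (univ : Finset (Fin 37)).erase p,
      (𝓑.filter fun b => p ∈ b ∧ q ∈ b).card = 288 := by
    have : ∀ q ∈ (univ : Finset (Fin 37)).erase p,
        (𝓑.filter fun b => p ∈ b ∧ q ∈ b).card = 8 := by
      intro q hq
      have hqp : q ≠ p := (Finset.mem_erase.mp hq).1
      have hcard : ({p, q} : Finset (Fin 37)).card = 2 := by
        rw [Finset.card_insert_of_notMem (by simp [hqp.symm]), Finset.card_singleton]
      have := hlam {p, q} hcard
      rw [← this]
      congr 1
      ext b
      simp [Finset.insert_subset_iff, Finset.singleton_subset_iff]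
    rw [Finset.sum_congr rfl this, Finset.sum_const, smul_eq_mul]
    simp
  have hR : ∀ b ∈ 𝓑, (((univ : Finset (Fin 37)).erase p).filter
      (fun q => p ∈ b ∧ q ∈ b)).card = if p ∈ b then 8 else 0 := by
    intro b hb
    by_cases hp : p ∈ b
    · have : (((univ : Finset (Fin 37)).erase p).filter (fun q => p ∈ b ∧ q ∈ b))
          = b.erase p := by
        ext q
        simp [Finset.mem_erase, hp, and_comm]
      rw [this, Finset.card_erase_of_mem hp, hk b hb]
      simp [hp]
    · simp [hp]
  rw [h, Finset.sum_congr rfl hR, Finset.sum_ite, Finset.sum_const, Finset.sum_const,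
    smul_eq_mul, smul_eq_mul] at hL
  omega
end counts


/-- Let `𝓑` be the block set of a quasi-symmetric 2-(37,9,8) design with
intersection numbers 1 and 3, and let `C` be a doubly even self-dual code of
length 40 containing the span `C₃` of the vectors `(χ_B, 1, 1, 1)`.  Then `C` has
no codeword of weight 8 whose support contains the last three coordinates. -/
theorem no_weight_eight_on_last_three (𝓑 : Finset (Finset (Fin 37)))
    (hk : ∀ b ∈ 𝓑, b.card = 9)
    (hlam : ∀ T : Finset (Fin 37), T.card = 2 → (𝓑.filter fun b => T ⊆ b).card = 8)
    (hquasi : ∀ b₁ ∈ 𝓑, ∀ b₂ ∈ 𝓑, b₁ ≠ b₂ →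
      (b₁ ∩ b₂).card = 1 ∨ (b₁ ∩ b₂).card = 3)
    (C : Submodule (ZMod 2) (Fin 37 ⊕ Fin 3 → ZMod 2))
    (hselfdual : ∀ z : Fin 37 ⊕ Fin 3 → ZMod 2,
      z ∈ C ↔ ∀ c ∈ C, ∑ i, z i * c i = 0)
    (hde : ∀ c ∈ C, 4 ∣ wt c)
    (hsub : Submodule.span (ZMod 2) (gen3 '' (𝓑 : Set (Finset (Fin 37)))) ≤ C) :
    ¬ ∃ c ∈ C, wt c = 8 ∧ ∀ j : Fin 3, c (Sum.inr j) ≠ 0 := by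
  rintro ⟨c, hcC, hwt, hlast⟩
  set S : Finset (Fin 37) := Finset.univ.filter (fun i => c (Sum.inl i) ≠ 0) with hSdef
  -- S has 5 points
  have hS5 : S.card = 5 := by
    have : wt c = S.card + 3 := by
      unfold wt
      rw [Finset.card_filter, Finset.card_filter, Fintype.sum_sum_type]
      congr 1
      simp [hlast]
    omega
  -- every block meets S in an odd number of points
  have hodd : ∀ b ∈ 𝓑, (S ∩ b).card % 2 = 1 := by
    intro b hb
    have hg : gen3 b ∈ C := hsub (Submodule.subset_span ⟨b, hb, rfl⟩)
    have horth := (hselfdual c).mp hcC (gen3 b) hg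
    rw [Fintype.sum_sum_type] at horth
    have h2 : ∑ j : Fin 3, c (Sum.inr j) * gen3 b (Sum.inr j) = 1 := by
      simp only [gen3, Sum.elim_inr, mul_one]
      rw [Fin.sum_univ_three, zmod2_ne_zero (hlast 0), zmod2_ne_zero (hlast 1),
        zmod2_ne_zero (hlast 2)]
      decide
    have h1 : ∑ i : Fin 37, c (Sum.inl i) * gen3 b (Sum.inl i)
        = ((S ∩ b).card : ZMod 2) := by
      have hpt : ∀ i : Fin 37, c (Sum.inl i) * gen3 b (Sum.inl i)
          = if i ∈ S ∩ b then 1 else 0 := by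
        intro i
        by_cases h1 : i ∈ S
        · have hc1 : c (Sum.inl i) = 1 := zmod2_ne_zero (by simpa [hSdef] using h1)
          by_cases h2 : i ∈ b <;>
            simp [gen3, chi, hc1, h1, h2, Finset.mem_inter]
        · have hc0 : c (Sum.inl i) = 0 := by
            by_contra h
            exact h1 (by simp [hSdef, h])
          simp [hc0, Finset.mem_inter, h1]
      rw [Finset.sum_congr rfl (fun i _ => hpt i)]
      rw [Finset.sum_ite_mem, Finset.univ_inter, Finset.sum_const, nsmul_eq_mul, mul_one]
    rw [h1, h2] at horth
    have : ((S ∩ b).card : ZMod 2) = 1 := by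
      have := eq_neg_of_add_eq_zero_left horth
      rw [this]; decide
    exact odd_of_cast _ this
  -- sum of intersections
  have hsum1 : ∑ b ∈ 𝓑, (S ∩ b).card = 180 := by
    have h := dc S 𝓑 (fun p b => p ∈ b)
    have hL : ∑ p ∈ S, (𝓑.filter fun b => p ∈ b).card = 180 := by
      rw [Finset.sum_congr rfl (fun p _ => repl 𝓑 hk hlam p), Finset.sum_const, hS5,
        smul_eq_mul]
    rw [h] at hL
    rw [← hL]
    exact Finset.sum_congr rfl fun b _ => by rw [Finset.filter_mem_eq_inter]
  -- sum of pair-counts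
  have hsum2 : ∑ b ∈ 𝓑, ((S ∩ b).card).choose 2 = 80 := by
    have key : ∀ b : Finset (Fin 37), ((S ∩ b).card).choose 2
        = ((Finset.powersetCard 2 S).filter (fun T => T ⊆ b)).card := by
      intro b
      rw [← Finset.card_powersetCard]
      congr 1
      ext T
      simp only [Finset.mem_powersetCard, Finset.mem_filter, Finset.subset_inter_iff]
      tauto
    rw [Finset.sum_congr rfl (fun b _ => key b), ← dc (Finset.powersetCard 2 S) 𝓑
      (fun T b => T ⊆ b)]
    rw [Finset.sum_congr rfl (fun T hT => hlam T (Finset.mem_powersetCard.mp hT).2),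
      Finset.sum_const, Finset.card_powersetCard, hS5]
    decide
  have hcard : 𝓑.card = 148 := block_count 𝓑 hk hlam
  -- pointwise identity
  have hpw : ∀ b ∈ 𝓑, 3 + 2 * ((S ∩ b).card).choose 2
      = 3 * (S ∩ b).card + (if (S ∩ b).card = 5 then 8 else 0) := by
    intro b hb
    have h1 := hodd b hb
    have h2 : (S ∩ b).card ≤ 5 := hS5 ▸ Finset.card_le_card Finset.inter_subset_left
    have h3 : (S ∩ b).card = 1 ∨ (S ∩ b).card = 3 ∨ (S ∩ b).card = 5 := by omega
    rcases h3 with h | h | h <;> rw [h] <;> decide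
  -- exactly 8 blocks contain S
  have hF : (𝓑.filter fun b => (S ∩ b).card = 5).card = 8 := by
    have hA : ∑ b ∈ 𝓑, (3 + 2 * ((S ∩ b).card).choose 2)
        = ∑ b ∈ 𝓑, (3 * (S ∩ b).card + (if (S ∩ b).card = 5 then 8 else 0)) :=
      Finset.sum_congr rfl hpw
    rw [Finset.sum_add_distrib, Finset.sum_add_distrib, Finset.sum_const, hcard,
      ← Finset.mul_sum, hsum2, ← Finset.mul_sum, hsum1, smul_eq_mul] at hA
    have hB : ∑ b ∈ 𝓑, (if (S ∩ b).card = 5 then 8 else 0)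
        = 8 * (𝓑.filter fun b => (S ∩ b).card = 5).card := by
      rw [← Finset.sum_filter, Finset.sum_const, smul_eq_mul, mul_comm]
    omega
  -- two distinct blocks containing S
  have h2lt : 1 < (𝓑.filter fun b => (S ∩ b).card = 5).card := by omega
  obtain ⟨b₁, hb₁, b₂, hb₂, hne⟩ := Finset.one_lt_card.mp h2lt
  have hSsub : ∀ b, b ∈ 𝓑.filter (fun b => (S ∩ b).card = 5) → S ⊆ b := by
    intro b hb
    obtain ⟨-, h5⟩ := Finset.mem_filter.mp hb
    have := Finset.eq_of_subset_of_card_le (Finset.inter_subset_left : S ∩ b ⊆ S)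
      (by omega)
    rw [← this]
    exact Finset.inter_subset_right
  have hle : 5 ≤ (b₁ ∩ b₂).card := by
    rw [← hS5]
    exact Finset.card_le_card (Finset.subset_inter (hSsub b₁ hb₁) (hSsub b₂ hb₂))
  have := hquasi b₁ (Finset.mem_filter.mp hb₁).1 b₂ (Finset.mem_filter.mp hb₂).1 hne
  omega
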